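/- Let V, H be separable Hilbert spaces, T ∈ L(V,H), and set Q := T T* ∈ L(H). Then the image of Q^{1/2} equals the image of T, and for every x ∈ Im T, ‖Q^{-1/2} x‖_H = ‖T⁻¹ x‖_V, where Q^{-1/2} and T⁻¹ denote pseudo-inverses. -/

import Mathlib

open scoped RealInnerProductSpace
open ContinuousLinearMap Filter Topology

section Aux

variable {V H : Type*} [NormedAddCommGroup V] [InnerProductSpace ℝ V] [CompleteSpace V]
  [NormedAddCommGroup H] [InnerProductSpace ℝ H] [CompleteSpace H]

private lemma norm_eq_of_inner_self_eq {E F : Type*} [NormedAddCommGroup E]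
    [InnerProductSpace ℝ E] [NormedAddCommGroup F] [InnerProductSpace ℝ F]
    {x : E} {y : F} (h : ⟪x, x⟫ = ⟪y, y⟫) : ‖x‖ = ‖y‖ := by
  rw [real_inner_self_eq_norm_sq, real_inner_self_eq_norm_sq] at h
  nlinarith [norm_nonneg x, norm_nonneg y]

private lemma ker_eq_orth_range_adjoint (T : V →L[ℝ] H) :
    LinearMap.ker (T : V →ₗ[ℝ] H) = (LinearMap.range (ContinuousLinearMap.adjoint T : H →ₗ[ℝ] V))ᗮ := by
  ext x
  rw [LinearMap.mem_ker, Submodule.mem_orthogonal]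
  constructor
  · rintro hx y ⟨z, rfl⟩
    rw [ContinuousLinearMap.coe_coe, ContinuousLinearMap.adjoint_inner_left]
    rw [ContinuousLinearMap.coe_coe] at hx
    simp [hx]
  · intro hx
    have h0 : ⟪T x, T x⟫ = 0 := by
      rw [← ContinuousLinearMap.adjoint_inner_left T x (T x)]
      exact hx _ ⟨T x, rfl⟩
    exact inner_self_eq_zero.mp h0

private lemma orth_ker_eq_closure (T : V →L[ℝ] H) :
    ((LinearMap.ker (T : V →ₗ[ℝ] H))ᗮ : Set V) =
      closure (Set.range (ContinuousLinearMap.adjoint T)) := by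
  rw [ker_eq_orth_range_adjoint, Submodule.orthogonal_orthogonal_eq_closure,
    Submodule.topologicalClosure_coe, LinearMap.coe_range, ContinuousLinearMap.coe_coe]

private lemma exists_seq_tendsto_of_mem_closure_range {E F : Type*} [TopologicalSpace E]
    [TopologicalSpace F] [FrechetUrysohnSpace F] {f : E → F} {x : F}
    (hx : x ∈ closure (Set.range f)) :
    ∃ a : ℕ → E, Tendsto (fun n => f (a n)) atTop (𝓝 x) := by
  obtain ⟨y, hy, hlim⟩ := mem_closure_iff_seq_limit.mp hx
  choose a ha using hy
  refine ⟨a, ?_⟩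
  simpa only [ha] using hlim

/-- Key construction: given `u ∈ (ker S)ᗮ`, there is `w ∈ (ker T)ᗮ` with `T w = S u`
and `‖w‖ = ‖u‖`. -/
private lemma key (T : V →L[ℝ] H) (S : H →L[ℝ] H)
    (hsa : ContinuousLinearMap.adjoint S = S)
    (hinner : ∀ a b : H, ⟪S a, S b⟫ =
      ⟪ContinuousLinearMap.adjoint T a, ContinuousLinearMap.adjoint T b⟫)
    {u : H} (hu : u ∈ (LinearMap.ker (S : H →ₗ[ℝ] H))ᗮ) :
    ∃ w ∈ (LinearMap.ker (T : V →ₗ[ℝ] H))ᗮ, T w = S u ∧ ‖w‖ = ‖u‖ := by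
  set A := ContinuousLinearMap.adjoint T with hA
  have hnorm : ∀ x : H, ‖S x‖ = ‖A x‖ := fun x => norm_eq_of_inner_self_eq (hinner x x)
  -- u lies in the closure of the range of S
  have hu' : u ∈ closure (Set.range S) := by
    have h1 : ((LinearMap.ker (S : H →ₗ[ℝ] H))ᗮ : Set H) = closure (Set.range S) := by
      have := orth_ker_eq_closure S
      rwa [hsa] at this
    rw [← h1]; exact hu
  obtain ⟨a, haS⟩ := exists_seq_tendsto_of_mem_closure_range hu'
  -- the sequence A (a n) is Cauchy
  have hCS : CauchySeq (fun n => S (a n)) := haS.cauchySeq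
  have hCA : CauchySeq (fun n => A (a n)) := by
    rw [Metric.cauchySeq_iff] at hCS ⊢
    intro ε hε
    obtain ⟨N, hN⟩ := hCS ε hε
    refine ⟨N, fun m hm n hn => ?_⟩
    have : dist (A (a m)) (A (a n)) = dist (S (a m)) (S (a n)) := by
      rw [dist_eq_norm, dist_eq_norm, ← map_sub, ← map_sub, hnorm]
    rw [this]
    exact hN m hm n hn
  obtain ⟨w, hw⟩ := cauchySeq_tendsto_of_complete hCA
  -- w belongs to (ker T)ᗮ
  have hwmem : w ∈ (LinearMap.ker (T : V →ₗ[ℝ] H))ᗮ := by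
    have hmem : ∀ n, A (a n) ∈ (LinearMap.ker (T : V →ₗ[ℝ] H))ᗮ := by
      intro n
      rw [Submodule.mem_orthogonal]
      intro z hz
      rw [LinearMap.mem_ker, ContinuousLinearMap.coe_coe] at hz
      rw [hA, ContinuousLinearMap.adjoint_inner_right, hz, inner_zero_left]
    have : w ∈ closure (((LinearMap.ker (T : V →ₗ[ℝ] H))ᗮ : Submodule ℝ V) : Set V) :=
      mem_closure_of_tendsto hw (Eventually.of_forall hmem)
    rwa [(Submodule.isClosed_orthogonal _).closure_eq] at this
  -- T w = S u
  have hTw : T w = S u := by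
    apply ext_inner_right ℝ
    intro h'
    have l1 : Tendsto (fun n => ⟪A (a n), A h'⟫) atTop (𝓝 ⟪w, A h'⟫) :=
      hw.inner tendsto_const_nhds
    have l2 : Tendsto (fun n => ⟪S (a n), S h'⟫) atTop (𝓝 ⟪u, S h'⟫) :=
      haS.inner tendsto_const_nhds
    have heq : (fun n => ⟪A (a n), A h'⟫) = fun n => ⟪S (a n), S h'⟫ := by
      funext n; exact (hinner (a n) h').symm
    rw [heq] at l1
    have h3 : ⟪w, A h'⟫ = ⟪u, S h'⟫ := tendsto_nhds_unique l1 l2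
    calc ⟪T w, h'⟫ = ⟪w, A h'⟫ := (ContinuousLinearMap.adjoint_inner_right T w h').symm
      _ = ⟪u, S h'⟫ := h3
      _ = ⟪S u, h'⟫ := by
          conv_lhs => rw [← hsa]
          exact ContinuousLinearMap.adjoint_inner_right S u h'
  -- ‖w‖ = ‖u‖
  have hIn : ⟪w, w⟫ = ⟪u, u⟫ := by
    have l1 : Tendsto (fun n => ⟪A (a n), w⟫) atTop (𝓝 ⟪w, w⟫) :=
      hw.inner tendsto_const_nhds
    have l2 : Tendsto (fun n => ⟪S (a n), u⟫) atTop (𝓝 ⟪u, u⟫) :=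
      haS.inner tendsto_const_nhds
    have heq : (fun n => ⟪A (a n), w⟫) = fun n => ⟪S (a n), u⟫ := by
      funext n
      calc ⟪A (a n), w⟫ = ⟪a n, T w⟫ := ContinuousLinearMap.adjoint_inner_left T w (a n)
        _ = ⟪a n, S u⟫ := by rw [hTw]
        _ = ⟪S (a n), u⟫ := by
            conv_lhs => rw [← hsa]
            exact ContinuousLinearMap.adjoint_inner_right S (a n) u
    rw [heq] at l1
    exact tendsto_nhds_unique l1 l2
  exact ⟨w, hwmem, hTw, norm_eq_of_inner_self_eq hIn⟩

/-- Dual construction: given `v ∈ (ker T)ᗮ`, there is `u` with `S u = T v`. -/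
private lemma key' (T : V →L[ℝ] H) (S : H →L[ℝ] H)
    (hsa : ContinuousLinearMap.adjoint S = S)
    (hinner : ∀ a b : H, ⟪S a, S b⟫ =
      ⟪ContinuousLinearMap.adjoint T a, ContinuousLinearMap.adjoint T b⟫)
    {v : V} (hv : v ∈ (LinearMap.ker (T : V →ₗ[ℝ] H))ᗮ) :
    ∃ u : H, S u = T v := by
  set A := ContinuousLinearMap.adjoint T with hA
  have hnorm : ∀ x : H, ‖S x‖ = ‖A x‖ := fun x => norm_eq_of_inner_self_eq (hinner x x)
  have hv' : v ∈ closure (Set.range A) := by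
    rw [← orth_ker_eq_closure T]; exact hv
  obtain ⟨b, hbA⟩ := exists_seq_tendsto_of_mem_closure_range hv'
  have hCA : CauchySeq (fun n => A (b n)) := hbA.cauchySeq
  have hCS : CauchySeq (fun n => S (b n)) := by
    rw [Metric.cauchySeq_iff] at hCA ⊢
    intro ε hε
    obtain ⟨N, hN⟩ := hCA ε hε
    refine ⟨N, fun m hm n hn => ?_⟩
    have : dist (S (b m)) (S (b n)) = dist (A (b m)) (A (b n)) := by
      rw [dist_eq_norm, dist_eq_norm, ← map_sub, ← map_sub, hnorm]
    rw [this]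
    exact hN m hm n hn
  obtain ⟨u, hu⟩ := cauchySeq_tendsto_of_complete hCS
  refine ⟨u, ?_⟩
  apply ext_inner_right ℝ
  intro h'
  have l1 : Tendsto (fun n => ⟪S (b n), S h'⟫) atTop (𝓝 ⟪u, S h'⟫) :=
    hu.inner tendsto_const_nhds
  have l2 : Tendsto (fun n => ⟪A (b n), A h'⟫) atTop (𝓝 ⟪v, A h'⟫) :=
    hbA.inner tendsto_const_nhds
  have heq : (fun n => ⟪S (b n), S h'⟫) = fun n => ⟪A (b n), A h'⟫ := by
    funext n; exact hinner (b n) h'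
  rw [heq] at l1
  have h3 : ⟪u, S h'⟫ = ⟪v, A h'⟫ := tendsto_nhds_unique l1 l2
  calc ⟪S u, h'⟫ = ⟪u, S h'⟫ := by
        conv_lhs => rw [← hsa]
        exact ContinuousLinearMap.adjoint_inner_left S h' u
    _ = ⟪v, A h'⟫ := h3
    _ = ⟪T v, h'⟫ := ContinuousLinearMap.adjoint_inner_right T v h'

end Aux

/-- Let `T ∈ L(V,H)` and `Q := T T* ∈ L(H)`.  If `S` is the (unique, via the functional
calculus) non-negative self-adjoint square root `Q^{1/2}` of `Q`, i.e. `S ∘ S = T T*`,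
then `Im Q^{1/2} = Im T`, and for every `x ∈ Im T`, `‖Q^{-1/2} x‖_H = ‖T⁻¹ x‖_V`, where
the pseudo-inverses are expressed through the unique preimages in `(Ker Q^{1/2})ᗮ`
and `(Ker T)ᗮ` respectively. -/
theorem range_sqrt_eq_range_and_pseudoInverse_norm
    {V H : Type*} [NormedAddCommGroup V] [InnerProductSpace ℝ V] [CompleteSpace V]
    [NormedAddCommGroup H] [InnerProductSpace ℝ H] [CompleteSpace H]
    (T : V →L[ℝ] H) (S : H →L[ℝ] H)
    (hsa : IsSelfAdjoint S) (hpos : ∀ x : H, 0 ≤ ⟪S x, x⟫)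
    (hsq : S ∘L S = T ∘L ContinuousLinearMap.adjoint T) :
    Set.range S = Set.range T ∧
      ∀ (x : H) (u : H) (v : V), u ∈ (LinearMap.ker (S : H →ₗ[ℝ] H))ᗮ → S u = x →
        v ∈ (LinearMap.ker (T : V →ₗ[ℝ] H))ᗮ → T v = x → ‖u‖ = ‖v‖ := by
  have hS_adj : ContinuousLinearMap.adjoint S = S :=
    ContinuousLinearMap.isSelfAdjoint_iff'.mp hsa
  set A := ContinuousLinearMap.adjoint T with hA
  have hinner : ∀ a b : H, ⟪S a, S b⟫ = ⟪A a, A b⟫ := by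
    intro a b
    have h1 : S (S b) = T (A b) := by
      have := ContinuousLinearMap.ext_iff.mp hsq b
      simpa using this
    calc ⟪S a, S b⟫ = ⟪a, S (S b)⟫ := by
          nth_rewrite 1 [← hS_adj]
          exact ContinuousLinearMap.adjoint_inner_left S (S b) a
      _ = ⟪a, T (A b)⟫ := by rw [h1]
      _ = ⟪A a, A b⟫ := (ContinuousLinearMap.adjoint_inner_left T (A b) a).symm
  haveI : CompleteSpace (LinearMap.ker (S : H →ₗ[ℝ] H)) :=
    (ContinuousLinearMap.isClosed_ker S).completeSpace_coe
  haveI : CompleteSpace (LinearMap.ker (T : V →ₗ[ℝ] H)) :=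
    (ContinuousLinearMap.isClosed_ker T).completeSpace_coe
  constructor
  · apply Set.Subset.antisymm
    · rintro x ⟨u₀, rfl⟩
      set u : H := u₀ - (Submodule.orthogonalProjection (LinearMap.ker (S : H →ₗ[ℝ] H)) u₀ : H) with hu_def
      have hu : u ∈ (LinearMap.ker (S : H →ₗ[ℝ] H))ᗮ := Submodule.sub_starProjection_mem_orthogonal u₀
      have hSu : S u = S u₀ := by
        have hk : S ((Submodule.orthogonalProjection (LinearMap.ker (S : H →ₗ[ℝ] H)) u₀ : H)) = 0 :=
          (Submodule.orthogonalProjection (LinearMap.ker (S : H →ₗ[ℝ] H)) u₀).2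
        rw [hu_def, map_sub, hk, sub_zero]
      obtain ⟨w, _, hTw, _⟩ := key T S hS_adj hinner hu
      exact ⟨w, by rw [hTw, hSu]⟩
    · rintro x ⟨v₀, rfl⟩
      set v : V := v₀ - (Submodule.orthogonalProjection (LinearMap.ker (T : V →ₗ[ℝ] H)) v₀ : V) with hv_def
      have hv : v ∈ (LinearMap.ker (T : V →ₗ[ℝ] H))ᗮ := Submodule.sub_starProjection_mem_orthogonal v₀
      have hTv : T v = T v₀ := by
        have hk : T ((Submodule.orthogonalProjection (LinearMap.ker (T : V →ₗ[ℝ] H)) v₀ : V)) = 0 :=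
          (Submodule.orthogonalProjection (LinearMap.ker (T : V →ₗ[ℝ] H)) v₀).2
        rw [hv_def, map_sub, hk, sub_zero]
      obtain ⟨u, hu⟩ := key' T S hS_adj hinner hv
      exact ⟨u, by rw [hu, hTv]⟩
  · intro x u v hu hSu hv hTv
    obtain ⟨w, hwmem, hTw, hnorm⟩ := key T S hS_adj hinner hu
    have hwv : w = v := by
      have hker : w - v ∈ LinearMap.ker (T : V →ₗ[ℝ] H) := by
        rw [LinearMap.mem_ker, ContinuousLinearMap.coe_coe, map_sub, hTw, hSu, hTv, sub_self]
      have horth : w - v ∈ (LinearMap.ker (T : V →ₗ[ℝ] H))ᗮ := Submodule.sub_mem _ hwmem hv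
      have h0 : ⟪w - v, w - v⟫ = 0 := (Submodule.mem_orthogonal _ _).mp horth _ hker
      exact sub_eq_zero.mp (inner_self_eq_zero.mp h0)
    rw [← hnorm, hwv]
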